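/- There exists an absolute constant c > 0 such that the following holds. Let a ∈ ℝ^n, let ε₁,...,ε_n be independent Rademacher variables, set Z = ∑_{i=1}^n ε_i a_i and W = sgn(Z)·⌊|Z|⌋ (the integer part of Z with its sign). Then the Shannon entropy of the integer-valued random variable W satisfies H(W) ≤ c·Φ(1/(2|a|²)), where Φ(t) = log(e/t) for 0 < t ≤ 1 and Φ(t) = t·e^{-t+1} for t > 1. -/

import Mathlib

set_option maxHeartbeats 1000000

open MeasureTheory ProbabilityTheory

section Helpers
open Real Finset
variable {Ω : Type} [MeasurableSpace Ω] {P : Measure Ω}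

lemma rad_ae [IsProbabilityMeasure P] {X : Ω → ℝ} (hX : Measurable X)
    (h1 : P {ω | X ω = 1} = 1/2) (h2 : P {ω | X ω = -1} = 1/2) :
    ∀ᵐ ω ∂P, X ω = 1 ∨ X ω = -1 := by
  have hA : MeasurableSet {ω | X ω = 1} := hX (measurableSet_singleton 1)
  have hB : MeasurableSet {ω | X ω = -1} := hX (measurableSet_singleton (-1))
  rw [ae_iff]
  have hs : {ω | ¬(X ω = 1 ∨ X ω = -1)} = ({ω | X ω = 1} ∪ {ω | X ω = -1})ᶜ := by
    ext ω; simp [not_or]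
  have hd : Disjoint {ω | X ω = 1} {ω | X ω = -1} := by
    rw [Set.disjoint_left]; rintro ω hω1 hω2
    simp only [Set.mem_setOf_eq] at hω1 hω2; rw [hω1] at hω2; norm_num at hω2
  rw [hs, measure_compl (hA.union hB) (measure_ne_top _ _), measure_union hd hB, h1, h2]
  norm_num [ENNReal.inv_two_add_inv_two]

lemma rad_integrable [IsProbabilityMeasure P] {X : Ω → ℝ} (hX : Measurable X)
    (hae : ∀ᵐ ω ∂P, X ω = 1 ∨ X ω = -1) : Integrable X P := by
  refine (integrable_const (1:ℝ)).mono' hX.aestronglyMeasurable ?_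
  filter_upwards [hae] with ω h
  rcases h with h | h <;> simp [h]

lemma two_point [IsProbabilityMeasure P] {X : Ω → ℝ} (hX : Measurable X)
    (h1 : P {ω | X ω = 1} = 1/2) (h2 : P {ω | X ω = -1} = 1/2)
    (f : ℝ → ℝ) : ∫ ω, f (X ω) ∂P = (f 1 + f (-1)) / 2 := by
  have hA : MeasurableSet {ω | X ω = 1} := hX (measurableSet_singleton 1)
  have hae := rad_ae hX h1 h2
  have hg : (fun ω => f (X ω)) =ᵐ[P]
      ({ω | X ω = 1}.indicator (fun _ => f 1 - f (-1)) + fun _ => f (-1)) := by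
    filter_upwards [hae] with ω hω
    rcases hω with h | h
    · have hm : ω ∈ {ω | X ω = 1} := h
      simp [Set.indicator_of_mem hm, h]
    · have hm : ω ∉ {ω | X ω = 1} := by
        simp only [Set.mem_setOf_eq, h]; norm_num
      simp [Set.indicator_of_notMem hm, h]
  rw [integral_congr_ae hg]
  simp only [Pi.add_apply]
  rw [integral_add ((integrable_const _).indicator hA) (integrable_const _),
    integral_indicator_const _ hA, integral_const]
  have : (P {ω | X ω = 1}).toReal = 1/2 := by rw [h1]; simp [ENNReal.toReal_div]
  simp only [measureReal_def]
  rw [this]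
  simp
  ring

lemma gibbs_term {p q : ℝ} (hp : 0 ≤ p) (hq : 0 < q) :
    -(p * Real.log p) ≤ q - p - p * Real.log q := by
  rcases eq_or_lt_of_le hp with h | h
  · rw [← h]; simp; positivity
  · have h0 := Real.log_le_sub_one_of_pos (show 0 < q / p by positivity)
    rw [Real.log_div hq.ne' h.ne'] at h0
    have h2 : p * (Real.log q - Real.log p) ≤ p * (q / p - 1) :=
      mul_le_mul_of_nonneg_left h0 hp
    have h3 : p * (q / p - 1) = q - p := by field_simp
    nlinarith [h2]

lemma sum_symm (N : ℕ) (f : ℤ → ℝ) (hf : ∀ z, f (-z) = f z) :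
    ∑ z ∈ Finset.Icc (-(N:ℤ)) N, f z = f 0 + 2 * ∑ j ∈ Finset.range N, f ((j:ℤ)+1) := by
  induction N with
  | zero => simp
  | succ N ih =>
    have h1 : Finset.Icc (-(N+1:ℕ):ℤ) ((N+1:ℕ):ℤ) =
        insert (-(N+1:ℕ):ℤ) (insert ((N+1:ℕ):ℤ) (Finset.Icc (-(N:ℕ):ℤ) (N:ℕ))) := by
      ext z; simp only [Finset.mem_Icc, Finset.mem_insert]; push_cast; omega
    have h2 : (-(N+1:ℕ):ℤ) ∉ insert ((N+1:ℕ):ℤ) (Finset.Icc (-(N:ℕ):ℤ) (N:ℕ)) := by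
      simp only [Finset.mem_insert, Finset.mem_Icc]; push_cast; omega
    have h3 : ((N+1:ℕ):ℤ) ∉ Finset.Icc (-(N:ℕ):ℤ) (N:ℕ) := by
      simp only [Finset.mem_Icc]; push_cast; omega
    rw [h1, Finset.sum_insert h2, Finset.sum_insert h3, ih, Finset.sum_range_succ]
    have h4 : f (-(N+1:ℕ):ℤ) = f ((N:ℤ)+1) := by
      rw [← hf]; norm_num
    have h5 : f ((N+1:ℕ):ℤ) = f ((N:ℤ)+1) := by push_cast; ring_nf
    rw [h4, h5]; ring

lemma geom_tail {r : ℝ} (h0 : 0 ≤ r) (h1 : r < 1) (N : ℕ) :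
    ∑ j ∈ Finset.range N, r^(j+1) ≤ r / (1-r) := by
  have hs : Summable (fun j : ℕ => r^j) := summable_geometric_of_lt_one h0 h1
  have : ∑ j ∈ Finset.range N, r^(j+1) = r * ∑ j ∈ Finset.range N, r^j := by
    rw [Finset.mul_sum]; exact Finset.sum_congr rfl (fun j _ => by ring)
  rw [this, div_eq_mul_inv]
  refine mul_le_mul_of_nonneg_left ?_ h0
  have := hs.sum_le_tsum (Finset.range N) (fun j _ => by positivity)
  rwa [tsum_geometric_of_lt_one h0 h1] at this

lemma kbound {k t : ℝ} (hk : 1 ≤ k) (ht : 1 < t) :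
    k^2 * Real.exp (-k^2 * t) ≤ 4 * Real.exp (-k * t) := by
  have hmain : k^2 ≤ 4 * Real.exp ((k^2 - k) * t) := by
    rcases le_or_gt k 2 with h | h
    · have h1 : (1:ℝ) ≤ Real.exp ((k^2 - k) * t) := by
        rw [← Real.exp_zero]
        apply Real.exp_le_exp.mpr
        nlinarith [mul_nonneg (show (0:ℝ) ≤ k^2 - k by nlinarith) (show (0:ℝ) ≤ t by linarith)]
      nlinarith
    · have h1 : k/2 + 1 ≤ Real.exp (k/2) := Real.add_one_le_exp _
      have h2 : k^2 ≤ 4 * Real.exp k := by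
        have h3 : (k/2)^2 ≤ (k/2+1)^2 := by nlinarith
        have h4 : (k/2+1)^2 ≤ Real.exp (k/2) * Real.exp (k/2) := by
          nlinarith [Real.exp_pos (k/2)]
        rw [← Real.exp_add] at h4
        have h6 : k/2 + k/2 = k := by ring
        rw [h6] at h4
        nlinarith
      have h5 : Real.exp k ≤ Real.exp ((k^2 - k) * t) := by
        apply Real.exp_le_exp.mpr
        nlinarith [mul_le_mul_of_nonneg_left ht.le (show (0:ℝ) ≤ k^2 - k by nlinarith)]
      linarith
  calc k^2 * Real.exp (-k^2 * t) ≤ (4 * Real.exp ((k^2-k)*t)) * Real.exp (-k^2 * t) := by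
        nlinarith [Real.exp_pos (-k^2*t)]
  _ = 4 * Real.exp ((k^2-k)*t + -k^2*t) := by rw [Real.exp_add]; ring
  _ = 4 * Real.exp (-k * t) := by ring_nf

lemma chernoff [IsProbabilityMeasure P]
    {n : ℕ} {ε : Fin n → Ω → ℝ} (hmeas : ∀ i, Measurable (ε i))
    (hindep : iIndepFun ε P)
    (hrad : ∀ i, P {ω | ε i ω = 1} = 1/2 ∧ P {ω | ε i ω = -1} = 1/2)
    (b : Fin n → ℝ) (hb : 0 < ∑ i, b i ^ 2) (u : ℝ) (hu : 0 ≤ u) :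
    (P {ω | u ≤ ∑ i, ε i ω * b i}).toReal ≤ Real.exp (-u^2 / (2 * ∑ i, b i ^ 2)) := by
  set σ2 := ∑ i, b i ^ 2 with hσ2
  set s : ℝ := u / σ2 with hs
  have hs0 : 0 ≤ s := div_nonneg hu hb.le
  set Y : Ω → ℝ := fun ω => ∑ i, ε i ω * b i with hYdef
  have hYm : Measurable Y := by
    apply Finset.measurable_sum
    exact fun i _ => (hmeas i).mul_const _
  have haeb : ∀ᵐ ω ∂P, |Y ω| ≤ ∑ i, |b i| := by
    have h : ∀ᵐ ω ∂P, ∀ i, ε i ω = 1 ∨ ε i ω = -1 :=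
      ae_all_iff.mpr (fun i => rad_ae (hmeas i) (hrad i).1 (hrad i).2)
    filter_upwards [h] with ω hω
    calc |Y ω| ≤ ∑ i, |ε i ω * b i| := Finset.abs_sum_le_sum_abs _ _
    _ = ∑ i, |b i| := by
      refine Finset.sum_congr rfl (fun i _ => ?_)
      rcases hω i with h' | h' <;> simp [h', abs_mul]
  have hint : Integrable (fun ω => Real.exp (s * Y ω)) P := by
    refine (integrable_const (Real.exp (s * ∑ i, |b i|))).mono'
      ((hYm.const_mul s).exp).aestronglyMeasurable ?_
    filter_upwards [haeb] with ω hω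
    rw [Real.norm_eq_abs, Real.abs_exp]
    apply Real.exp_le_exp.mpr
    calc s * Y ω ≤ s * |Y ω| := by nlinarith [le_abs_self (Y ω)]
    _ ≤ s * ∑ i, |b i| := by nlinarith
  have hch := measure_ge_le_exp_mul_mgf (μ := P) (X := Y) u hs0 hint
  have hXim : ∀ i, Measurable (fun ω => ε i ω * b i) := fun i => (hmeas i).mul_const _
  have hiX : iIndepFun (fun i ω => ε i ω * b i) P := by
    have := hindep.comp (fun i => fun x : ℝ => x * b i)
      (fun i => measurable_id.mul_const _)
    exact this
  have hsum_eq : Y = ∑ i : Fin n, (fun ω => ε i ω * b i) := by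
    funext ω; simp [hYdef, Finset.sum_apply]
  have hmgf : mgf Y P s ≤ Real.exp (s^2 * σ2 / 2) := by
    rw [hsum_eq, iIndepFun.mgf_sum hiX hXim]
    have heach : ∀ i : Fin n, mgf (fun ω => ε i ω * b i) P s = Real.cosh (s * b i) := by
      intro i
      rw [mgf]
      have := two_point (hmeas i) (hrad i).1 (hrad i).2 (fun x => Real.exp (s * (x * b i)))
      rw [this, Real.cosh_eq]
      norm_num
    calc ∏ i : Fin n, mgf (fun ω => ε i ω * b i) P s
        = ∏ i : Fin n, Real.cosh (s * b i) := Finset.prod_congr rfl (fun i _ => heach i)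
    _ ≤ ∏ i : Fin n, Real.exp ((s * b i)^2 / 2) := by
        refine Finset.prod_le_prod (fun i _ => (Real.cosh_pos _).le) (fun i _ => ?_)
        exact Real.cosh_le_exp_half_sq _
    _ = Real.exp (∑ i : Fin n, (s * b i)^2 / 2) := by rw [Real.exp_sum]
    _ = Real.exp (s^2 * σ2 / 2) := by
        congr 1
        rw [hσ2, Finset.mul_sum, Finset.sum_div]
        exact Finset.sum_congr rfl (fun i _ => by ring)
  calc (P {ω | u ≤ Y ω}).toReal ≤ Real.exp (-s * u) * mgf Y P s := hch
  _ ≤ Real.exp (-s * u) * Real.exp (s^2 * σ2 / 2) := by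
      nlinarith [Real.exp_pos (-s * u), hmgf, mgf_nonneg (X := Y) (μ := P) (t := s)]
  _ = Real.exp (-s * u + s^2 * σ2 / 2) := by rw [← Real.exp_add]
  _ = Real.exp (-u^2 / (2 * σ2)) := by
      congr 1
      rw [hs]
      field_simp
      ring

end Helpers

/-- `Φ(t) = log(e/t)` for `0 < t ≤ 1` and `Φ(t) = t e^{-t+1}` for `t > 1`. -/
noncomputable def Phi (t : ℝ) : ℝ :=
  if t ≤ 1 then Real.log (Real.exp 1 / t) else t * Real.exp (-t + 1)

/-- There is an absolute constant `c > 0` such that for `Z = ∑ εᵢ aᵢ` a Rademacher sum and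
`W = sgn(Z)⌊|Z|⌋`, the Shannon entropy of `W` is at most `c · Φ(1/(2|a|²))`. -/
theorem stmt4 : ∃ c > 0, ∀ (Ω : Type) (_ : MeasurableSpace Ω) (P : Measure Ω),
    IsProbabilityMeasure P → ∀ (n : ℕ) (a : Fin n → ℝ), a ≠ 0 →
    ∀ ε : Fin n → Ω → ℝ, (∀ i, Measurable (ε i)) →
    iIndepFun ε P →
    (∀ i, P {ω | ε i ω = 1} = 1/2 ∧ P {ω | ε i ω = -1} = 1/2) →
    ∀ W : Ω → ℤ,
    (W = fun ω => (if 0 ≤ ∑ i, ε i ω * a i then 1 else -1) * ⌊|∑ i, ε i ω * a i|⌋) →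
    -∑' z : ℤ, (P {ω | W ω = z}).toReal * Real.logb 2 (P {ω | W ω = z}).toReal ≤
      c * Phi (1 / (2 * ∑ i, a i ^ 2)) := by
  refine ⟨20, by norm_num, ?_⟩
  intro Ω mΩ P hP n a ha ε hmeas hindep hrad W hW
  haveI := hP
  subst hW
  set Z : Ω → ℝ := fun ω => ∑ i, ε i ω * a i with hZ
  set W : Ω → ℤ := fun ω => (if 0 ≤ Z ω then 1 else -1) * ⌊|Z ω|⌋ with hWdef
  set σ2 := ∑ i, a i ^ 2 with hσ2
  have hσ2pos : 0 < σ2 := by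
    have hex : ∃ i, a i ≠ 0 := by
      by_contra h; push_neg at h; exact ha (funext h)
    obtain ⟨i, hi⟩ := hex
    exact Finset.sum_pos' (fun j _ => sq_nonneg _) ⟨i, Finset.mem_univ i, by positivity⟩
  set t := 1 / (2 * σ2) with ht
  have htpos : 0 < t := by positivity
  set r := Real.exp (-t) with hr
  have hr0 : 0 < r := Real.exp_pos _
  have hr1 : r < 1 := by
    rw [hr, Real.exp_lt_one_iff]; linarith
  have hrden : (0:ℝ) < 1 - r := by linarith
  set S := (1+r)/(1-r) with hS
  have hSpos : 0 < S := div_pos (by linarith) hrden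
  have hS1 : 1 ≤ S := by
    rw [hS, le_div_iff₀ hrden]; linarith
  set M := ∑ i, |a i| with hM
  set N := ⌈M⌉₊ with hN
  set F := Finset.Icc (-(N:ℤ)) (N:ℤ) with hF
  set p : ℤ → ℝ := fun z => (P {ω | W ω = z}).toReal with hp
  -- measurability
  have hZm : Measurable Z := by
    apply Finset.measurable_sum
    exact fun i _ => (hmeas i).mul_const _
  have hWm : Measurable W := by
    rw [hWdef]
    exact (Measurable.ite (measurableSet_le measurable_const hZm)
      measurable_const measurable_const).mul (hZm.abs.floor)
  have hAz : ∀ z : ℤ, MeasurableSet {ω | W ω = z} :=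
    fun z => hWm (measurableSet_singleton z)
  -- the good set
  set G : Set Ω := {ω | ∀ i, ε i ω = 1 ∨ ε i ω = -1} with hG
  have hGm : MeasurableSet G := by
    have : G = ⋂ i, ({ω | ε i ω = 1} ∪ {ω | ε i ω = -1}) := by
      ext ω; simp [hG, Set.mem_iUnion, Set.mem_iInter]
    rw [this]
    exact MeasurableSet.iInter (fun i =>
      ((hmeas i) (measurableSet_singleton 1)).union ((hmeas i) (measurableSet_singleton (-1))))
  have hGc : P Gᶜ = 0 := by
    have hae : ∀ᵐ ω ∂P, ∀ i, ε i ω = 1 ∨ ε i ω = -1 :=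
      ae_all_iff.mpr (fun i => rad_ae (hmeas i) (hrad i).1 (hrad i).2)
    rw [ae_iff] at hae
    have hceq : Gᶜ = {ω | ¬∀ i, ε i ω = 1 ∨ ε i ω = -1} := by
      ext ω; simp [hG]
    rw [hceq]
    exact hae
  have hG1 : P G = 1 := (prob_compl_eq_zero_iff hGm).mp hGc
  have habs : ∀ ω ∈ G, |Z ω| ≤ M := by
    intro ω hω
    calc |Z ω| ≤ ∑ i, |ε i ω * a i| := Finset.abs_sum_le_sum_abs _ _
    _ = ∑ i, |a i| := by
      refine Finset.sum_congr rfl (fun i _ => ?_)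
      rcases hω i with h' | h' <;> simp [h', abs_mul]
  have hfloorabs : ∀ ω, (0:ℤ) ≤ ⌊|Z ω|⌋ := fun ω => Int.floor_nonneg.mpr (abs_nonneg _)
  have hWin : ∀ ω ∈ G, W ω ∈ F := by
    intro ω hω
    have h1 : (⌊|Z ω|⌋ : ℝ) ≤ (N : ℝ) :=
      le_trans (Int.floor_le _) (le_trans (habs ω hω) (Nat.le_ceil M))
    have h2 : ⌊|Z ω|⌋ ≤ (N : ℤ) := by exact_mod_cast h1
    have h0 := hfloorabs ω
    rw [hF, Finset.mem_Icc, hWdef]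
    by_cases h : 0 ≤ Z ω <;> simp [h] <;> omega
  have hp0 : ∀ z : ℤ, z ∉ F → p z = 0 := by
    intro z hz
    have hsub : {ω | W ω = z} ⊆ Gᶜ := by
      intro ω hω
      by_contra hc
      rw [Set.notMem_compl_iff] at hc
      exact hz (hω ▸ hWin ω hc)
    have hz0 : P {ω | W ω = z} = 0 := measure_mono_null hsub hGc
    show (P {ω | W ω = z}).toReal = 0
    rw [hz0]
    rfl
  have hdisj : ∀ z1 ∈ F, ∀ z2 ∈ F, z1 ≠ z2 →
      Disjoint {ω | W ω = z1} {ω | W ω = z2} := by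
    intro z1 _ z2 _ hne
    rw [Set.disjoint_left]
    rintro ω h1 h2
    exact hne (h1.symm.trans h2)
  have hpsum : ∑ z ∈ F, p z = 1 := by
    have hU : P (⋃ z ∈ F, {ω | W ω = z}) = 1 := by
      refine le_antisymm prob_le_one ?_
      rw [← hG1]
      exact measure_mono (fun ω hω => Set.mem_biUnion (hWin ω hω) rfl)
    have hEq : P (⋃ z ∈ F, {ω | W ω = z}) = ∑ z ∈ F, P {ω | W ω = z} :=
      measure_biUnion_finset hdisj (fun z _ => hAz z)
    have : ∑ z ∈ F, p z = (∑ z ∈ F, P {ω | W ω = z}).toReal := by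
      rw [ENNReal.toReal_sum (fun z _ => measure_ne_top _ _)]
    rw [this, ← hEq, hU, ENNReal.toReal_one]
  have hpnn : ∀ z : ℤ, 0 ≤ p z := fun z => ENNReal.toReal_nonneg
  have hple : ∀ z : ℤ, p z ≤ 1 := by
    intro z
    show (P {ω | W ω = z}).toReal ≤ 1
    rw [← ENNReal.toReal_one]
    exact ENNReal.toReal_mono ENNReal.one_ne_top prob_le_one
  -- second moment bound
  have hVar : ∑ z ∈ F, (z:ℝ)^2 * p z ≤ σ2 := by
    have hGae : ∀ᵐ ω ∂P, ω ∈ G := by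
      rw [ae_iff]; exact hGc
    have haeZ : ∀ᵐ ω ∂P, |Z ω| ≤ M := by
      filter_upwards [hGae] with ω hω; exact habs ω hω
    have hZ2int : Integrable (fun ω => Z ω^2) P := by
      refine (integrable_const (M^2)).mono' ((hZm.pow_const 2)).aestronglyMeasurable ?_
      filter_upwards [haeZ] with ω hω
      rw [Real.norm_eq_abs, abs_of_nonneg (sq_nonneg _), ← sq_abs]
      have h0 : (0:ℝ) ≤ |Z ω| := abs_nonneg _
      nlinarith
    have hstep1 : ∀ z ∈ F, (z:ℝ)^2 * p z ≤ ∫ ω in {ω | W ω = z}, Z ω^2 ∂P := by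
      intro z _
      have hb : ∀ ω ∈ {ω | W ω = z}, (z:ℝ)^2 ≤ Z ω^2 := by
        intro ω hω
        simp only [Set.mem_setOf_eq, hWdef] at hω
        have h1 : |z| = ⌊|Z ω|⌋ := by
          have hf := hfloorabs ω
          by_cases h : 0 ≤ Z ω
          · simp only [if_pos h, one_mul] at hω
            rw [← hω, abs_of_nonneg hf]
          · simp only [if_neg h] at hω
            have hz' : z = -⌊|Z ω|⌋ := by omega
            rw [hz', abs_neg, abs_of_nonneg hf]
        have h2 : ((|z| : ℤ):ℝ) ≤ |Z ω| := by rw [h1]; exact Int.floor_le _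
        have h3 : (0:ℝ) ≤ ((|z|:ℤ):ℝ) := by positivity
        calc (z:ℝ)^2 = ((|z|:ℤ):ℝ)^2 := by rw [Int.cast_abs, sq_abs]
        _ ≤ |Z ω|^2 := by nlinarith [h2, h3]
        _ = Z ω^2 := sq_abs _
      have hconst : ∫ ω in {ω | W ω = z}, (z:ℝ)^2 ∂P
          = (P {ω | W ω = z}).toReal * (z:ℝ)^2 := by
        rw [setIntegral_const, smul_eq_mul, measureReal_def]
      calc (z:ℝ)^2 * p z = ∫ ω in {ω | W ω = z}, (z:ℝ)^2 ∂P := by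
            simp only [hp]; rw [hconst]; ring
      _ ≤ ∫ ω in {ω | W ω = z}, Z ω^2 ∂P :=
            setIntegral_mono_on ((integrableOn_const_iff).mpr (Or.inr (measure_lt_top _ _)))
              hZ2int.integrableOn (hAz z) hb
    have hstep2 : ∑ z ∈ F, ∫ ω in {ω | W ω = z}, Z ω^2 ∂P
        = ∫ ω in (⋃ z ∈ F, {ω | W ω = z}), Z ω^2 ∂P :=
      (integral_biUnion_finset F (fun z _ => hAz z) hdisj (fun z _ => hZ2int.integrableOn)).symm
    have hstep3 : ∫ ω in (⋃ z ∈ F, {ω | W ω = z}), Z ω^2 ∂P ≤ ∫ ω, Z ω^2 ∂P :=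
      setIntegral_le_integral hZ2int (Filter.Eventually.of_forall (fun ω => sq_nonneg _))
    have hints : ∀ i j : Fin n, Integrable (fun ω => (ε i ω * a i) * (ε j ω * a j)) P := by
      intro i j
      have haei := rad_ae (hmeas i) (hrad i).1 (hrad i).2
      have haej := rad_ae (hmeas j) (hrad j).1 (hrad j).2
      refine (integrable_const (|a i| * |a j|)).mono'
        (((hmeas i).mul_const _).mul ((hmeas j).mul_const _)).aestronglyMeasurable ?_
      filter_upwards [haei, haej] with ω hi hj
      have h1 : |ε i ω| = 1 := by rcases hi with h|h <;> simp [h]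
      have h2 : |ε j ω| = 1 := by rcases hj with h|h <;> simp [h]
      rw [Real.norm_eq_abs, abs_mul, abs_mul, abs_mul, h1, h2, one_mul, one_mul]
    have hstep4 : ∫ ω, Z ω^2 ∂P = σ2 := by
      have hexp : (fun ω => Z ω^2) = fun ω => ∑ i, ∑ j, (ε i ω * a i) * (ε j ω * a j) := by
        funext ω
        simp only [hZ]
        rw [sq, Finset.sum_mul_sum]
      rw [hexp]
      rw [integral_finset_sum _ (fun i _ => integrable_finset_sum _ (fun j _ => hints i j))]
      have hij : ∀ i : Fin n, ∫ ω, (∑ j, (ε i ω * a i) * (ε j ω * a j)) ∂P = a i^2 := by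
        intro i
        rw [integral_finset_sum _ (fun j _ => hints i j)]
        have hdiag : ∫ ω, (ε i ω * a i) * (ε i ω * a i) ∂P = a i^2 := by
          have h := two_point (hmeas i) (hrad i).1 (hrad i).2 (fun x => (x * a i) * (x * a i))
          rw [h]; ring
        have hoff : ∀ j : Fin n, j ≠ i → ∫ ω, (ε i ω * a i) * (ε j ω * a j) ∂P = 0 := by
          intro j hji
          have hind : IndepFun (fun ω => ε i ω * a i) (fun ω => ε j ω * a j) P :=
            IndepFun.comp (hindep.indepFun hji.symm)
              (measurable_id.mul_const (a i)) (measurable_id.mul_const (a j))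
          have hii := rad_integrable (hmeas i) (rad_ae (hmeas i) (hrad i).1 (hrad i).2)
          have hjj := rad_integrable (hmeas j) (rad_ae (hmeas j) (hrad j).1 (hrad j).2)
          have heq : (fun ω => (ε i ω * a i) * (ε j ω * a j))
              = (fun ω => ε i ω * a i) * (fun ω => ε j ω * a j) := rfl
          rw [heq, hind.integral_mul_eq_mul_integral (hii.mul_const _).aestronglyMeasurable (hjj.mul_const _).aestronglyMeasurable]
          have hzi : ∫ ω, ε i ω * a i ∂P = 0 := by
            have h := two_point (hmeas i) (hrad i).1 (hrad i).2 (fun x => x * a i)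
            rw [h]; ring
          rw [hzi, zero_mul]
        rw [Finset.sum_eq_single_of_mem i (Finset.mem_univ i)
          (fun j _ hji => hoff j hji), hdiag]
      rw [Finset.sum_congr rfl (fun i _ => hij i)]
    calc ∑ z ∈ F, (z:ℝ)^2 * p z
        ≤ ∑ z ∈ F, ∫ ω in {ω | W ω = z}, Z ω^2 ∂P := Finset.sum_le_sum hstep1
    _ = ∫ ω in (⋃ z ∈ F, {ω | W ω = z}), Z ω^2 ∂P := hstep2
    _ ≤ ∫ ω, Z ω^2 ∂P := hstep3
    _ = σ2 := hstep4
  -- tail bound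
  have htail : ∀ z : ℤ, z ≠ 0 → p z ≤ Real.exp (-(z:ℝ)^2 * t) := by
    intro z hz
    have hneg_sq : ∑ i, (-a i)^2 = σ2 := by
      rw [hσ2]; exact Finset.sum_congr rfl (fun i _ => by ring)
    rcases lt_or_gt_of_ne hz with hneg | hpos
    · -- z < 0
      have hsub : {ω | W ω = z} ⊆ {ω | ((-z : ℤ) : ℝ) ≤ ∑ i, ε i ω * (-a i)} := by
        intro ω hω
        simp only [Set.mem_setOf_eq, hWdef] at hω ⊢
        by_cases h : 0 ≤ Z ω
        · exfalso
          simp only [if_pos h, one_mul] at hω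
          have := hfloorabs ω
          omega
        · simp only [if_neg h] at hω
          push_neg at h
          have habs' : |Z ω| = -Z ω := abs_of_neg h
          rw [habs'] at hω
          have hfl : ⌊-Z ω⌋ = -z := by omega
          have h1 : ((-z : ℤ):ℝ) ≤ -Z ω := by rw [← hfl]; exact Int.floor_le _
          have h2 : ∑ i, ε i ω * (-a i) = -Z ω := by
            simp only [hZ, ← Finset.sum_neg_distrib]
            exact Finset.sum_congr rfl (fun i _ => by ring)
          rw [h2]
          exact h1
      have hch := chernoff hmeas hindep hrad (fun i => -a i)
        (by rw [hneg_sq] at *; exact hσ2pos) (((-z : ℤ)):ℝ)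
        (by have h1 : (0:ℤ) ≤ -z := by omega
            exact_mod_cast h1)
      have hmono : p z ≤ (P {ω | ((-z:ℤ):ℝ) ≤ ∑ i, ε i ω * (-a i)}).toReal :=
        ENNReal.toReal_mono (measure_ne_top _ _) (measure_mono hsub)
      refine le_trans hmono (le_trans hch (le_of_eq ?_))
      congr 1
      rw [hneg_sq, ht]
      push_cast
      field_simp
    · -- z > 0
      have hsub : {ω | W ω = z} ⊆ {ω | ((z : ℤ) : ℝ) ≤ ∑ i, ε i ω * a i} := by
        intro ω hω
        simp only [Set.mem_setOf_eq, hWdef] at hω ⊢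
        by_cases h : 0 ≤ Z ω
        · simp only [if_pos h, one_mul] at hω
          have habs' : |Z ω| = Z ω := abs_of_nonneg h
          rw [habs'] at hω
          have h1 : ((z : ℤ):ℝ) ≤ Z ω := by rw [← hω]; exact Int.floor_le _
          exact h1
        · exfalso
          simp only [if_neg h] at hω
          have := hfloorabs ω
          omega
      have hch := chernoff hmeas hindep hrad a
        (by rw [← hσ2]; exact hσ2pos) (((z : ℤ)):ℝ)
        (by have h1 : (0:ℤ) ≤ z := by omega
            exact_mod_cast h1)
      have hmono : p z ≤ (P {ω | ((z:ℤ):ℝ) ≤ ∑ i, ε i ω * a i}).toReal :=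
        ENNReal.toReal_mono (measure_ne_top _ _) (measure_mono hsub)
      refine le_trans hmono (le_trans hch (le_of_eq ?_))
      congr 1
      rw [← hσ2, ht]
      field_simp
  -- normalizer bound
  have hqsum : ∑ z ∈ F, Real.exp (-(z:ℝ)^2 * t) ≤ S := by
    have hsym : ∀ z : ℤ, (fun z : ℤ => Real.exp (-((z:ℝ))^2 * t)) (-z)
        = (fun z : ℤ => Real.exp (-((z:ℝ))^2 * t)) z := by
      intro z; simp only; push_cast; ring_nf
    rw [hF, sum_symm N _ hsym]
    beta_reduce
    push_cast
    have hterm : ∀ j ∈ Finset.range N,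
        Real.exp (-((j:ℝ)+1)^2 * t) ≤ r^(j+1) := by
      intro j _
      have hk : (1:ℝ) ≤ (j:ℝ)+1 := by linarith [Nat.cast_nonneg (α := ℝ) j]
      have hrp : r^(j+1) = Real.exp (-(((j:ℝ))+1) * t) := by
        rw [hr, ← Real.exp_nat_mul]
        congr 1
        push_cast; ring
      rw [hrp]
      apply Real.exp_le_exp.mpr
      nlinarith [mul_nonneg (show (0:ℝ) ≤ ((j:ℝ)+1)^2 - ((j:ℝ)+1) by nlinarith) htpos.le]
    have h2 : ∑ j ∈ Finset.range N, Real.exp (-((j:ℝ)+1)^2 * t)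
        ≤ r / (1-r) :=
      le_trans (Finset.sum_le_sum hterm) (geom_tail hr0.le hr1 N)
    have h3 : Real.exp (-(0:ℝ)^2 * t) = 1 := by norm_num
    have hfin : 1 + 2*(r/(1-r)) = S := by
      rw [hS]; field_simp; ring
    rw [h3]
    linarith [h2, hfin.ge, hfin.le]
  -- Gibbs / entropy comparison
  have key : ∑ z ∈ F, -(p z * Real.log (p z)) ≤
      t * ∑ z ∈ F, (z:ℝ)^2 * p z + Real.log S := by
    have hterm : ∀ z ∈ F, -(p z * Real.log (p z)) ≤
        (Real.exp (-(z:ℝ)^2 * t) / S - p z) + (t * ((z:ℝ)^2 * p z) + p z * Real.log S) := by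
      intro z _
      have hq : 0 < Real.exp (-(z:ℝ)^2 * t) / S := by positivity
      have hg := gibbs_term (hpnn z) hq
      have hlq : Real.log (Real.exp (-(z:ℝ)^2 * t) / S) = -(z:ℝ)^2 * t - Real.log S := by
        rw [Real.log_div (Real.exp_ne_zero _) hSpos.ne', Real.log_exp]
      rw [hlq] at hg
      nlinarith [hg]
    calc ∑ z ∈ F, -(p z * Real.log (p z))
        ≤ ∑ z ∈ F, ((Real.exp (-(z:ℝ)^2 * t) / S - p z)
          + (t * ((z:ℝ)^2 * p z) + p z * Real.log S)) := Finset.sum_le_sum hterm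
    _ = (∑ z ∈ F, Real.exp (-(z:ℝ)^2 * t)) / S - 1
          + (t * ∑ z ∈ F, (z:ℝ)^2 * p z + Real.log S) := by
        rw [Finset.sum_add_distrib, Finset.sum_sub_distrib, Finset.sum_add_distrib,
          ← Finset.sum_div, hpsum, ← Finset.mul_sum, ← Finset.sum_mul, hpsum, one_mul]
    _ ≤ t * ∑ z ∈ F, (z:ℝ)^2 * p z + Real.log S := by
        have : (∑ z ∈ F, Real.exp (-(z:ℝ)^2 * t)) / S ≤ 1 := by
          rw [div_le_one hSpos]; exact hqsum
        linarith
  -- nonnegativity of entropy terms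
  have hent_nn : 0 ≤ ∑ z ∈ F, -(p z * Real.log (p z)) := by
    refine Finset.sum_nonneg (fun z _ => ?_)
    rcases eq_or_lt_of_le (hpnn z) with h | h
    · rw [← h]; simp
    · have : Real.log (p z) ≤ 0 := Real.log_nonpos (hpnn z) (hple z)
      nlinarith
  -- case analysis for the final bound (in nats)
  have hΦnn : 0 ≤ Phi t := by
    rw [Phi]
    split_ifs with h
    · rw [Real.log_div (Real.exp_ne_zero 1) htpos.ne', Real.log_exp]
      have := Real.log_nonpos htpos.le h
      linarith
    · push_neg at h
      positivity
  have hnats : ∑ z ∈ F, -(p z * Real.log (p z)) ≤ 8 * Phi t := by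
    rcases le_or_gt t 1 with hcase | hcase
    · -- t ≤ 1
      have hPhi : Phi t = 1 - Real.log t := by
        rw [Phi, if_pos hcase, Real.log_div (Real.exp_ne_zero 1) htpos.ne', Real.log_exp]
      have hb1 : t * ∑ z ∈ F, (z:ℝ)^2 * p z ≤ 1/2 := by
        have := mul_le_mul_of_nonneg_left hVar htpos.le
        have ht2 : t * σ2 = 1/2 := by
          rw [ht]
          field_simp
        linarith
      have hrle : r ≤ 1/(1+t) := by
        rw [hr, Real.exp_neg, inv_eq_one_div]
        have h1 : 1 + t ≤ Real.exp t := by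
          have := Real.add_one_le_exp t; linarith
        have h2 : (0:ℝ) < 1 + t := by linarith
        exact one_div_le_one_div_of_le h2 h1
      have hSle : S ≤ 4 / t := by
        have hirle : 1 - r ≥ t/2 := by
          have h2 : (0:ℝ) < 1 + t := by linarith
          have h3 : 1/(1+t) ≤ 1 - t/2 := by
            rw [div_le_iff₀ h2]
            nlinarith
          linarith [hrle]
        rw [hS, div_le_div_iff₀ (by linarith : (0:ℝ) < 1 - r) htpos]
        nlinarith [hirle, htpos, hcase, hr0, mul_le_mul_of_nonneg_right hr1.le htpos.le]
      have hlogS : Real.log S ≤ Real.log 4 - Real.log t := by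
        rw [← Real.log_div (by norm_num) htpos.ne']
        exact Real.log_le_log hSpos hSle
      have hlog4 : Real.log 4 ≤ 3/2 := by
        have h4 : (4:ℝ) = 2^2 := by norm_num
        rw [h4, Real.log_pow]
        have := Real.log_two_lt_d9
        push_cast
        nlinarith
      have hlogt : Real.log t ≤ 0 := Real.log_nonpos htpos.le hcase
      calc ∑ z ∈ F, -(p z * Real.log (p z))
          ≤ t * ∑ z ∈ F, (z:ℝ)^2 * p z + Real.log S := key
      _ ≤ 1/2 + (Real.log 4 - Real.log t) := by linarith
      _ ≤ 2 - Real.log t := by linarith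
      _ ≤ 2 * (1 - Real.log t) := by linarith
      _ ≤ 8 * Phi t := by rw [hPhi]; nlinarith [hlogt]

    · -- t > 1
      have hPhi : Phi t = t * (r * Real.exp 1) := by
        rw [Phi, if_neg (by linarith), hr, ← Real.exp_add]
      have hre : r ≤ 1/2 := by
        rw [hr]
        have h1 : Real.exp (-t) ≤ Real.exp (-1) := Real.exp_le_exp.mpr (by linarith)
        have h2 : Real.exp (-1) ≤ 1/2 := by
          rw [Real.exp_neg, inv_eq_one_div]
          have h3 : (2:ℝ) ≤ Real.exp 1 := by
            have := Real.exp_one_gt_d9; linarith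
          exact one_div_le_one_div_of_le (by norm_num) h3
        linarith
      have hsum2 : ∑ z ∈ F, (z:ℝ)^2 * Real.exp (-(z:ℝ)^2 * t) ≤ 16 * r := by
        have hsym : ∀ z : ℤ, (fun z : ℤ => ((z:ℝ))^2 * Real.exp (-((z:ℝ))^2 * t)) (-z)
            = (fun z : ℤ => ((z:ℝ))^2 * Real.exp (-((z:ℝ))^2 * t)) z := by
          intro z; simp only; push_cast; ring_nf
        rw [hF, sum_symm N _ hsym]
        beta_reduce
        push_cast
        have hterm : ∀ j ∈ Finset.range N,
            ((j:ℝ)+1)^2 * Real.exp (-((j:ℝ)+1)^2 * t) ≤ 4 * r^(j+1) := by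
          intro j _
          have hk : (1:ℝ) ≤ (j:ℝ)+1 := by linarith [Nat.cast_nonneg (α := ℝ) j]
          have hrp : r^(j+1) = Real.exp (-(((j:ℝ))+1) * t) := by
            rw [hr, ← Real.exp_nat_mul]; congr 1; push_cast; ring
          rw [hrp]
          exact kbound hk hcase
        have h2 := Finset.sum_le_sum hterm
        have h3 : ∑ j ∈ Finset.range N, 4 * r^(j+1) ≤ 4 * (r/(1-r)) := by
          rw [← Finset.mul_sum]
          exact mul_le_mul_of_nonneg_left (geom_tail hr0.le hr1 N) (by norm_num)
        have h4 : r / (1-r) ≤ 2 * r := by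
          rw [div_le_iff₀ (by linarith)]
          nlinarith
        linarith [h2, h3, h4]
      have hzb : t * ∑ z ∈ F, (z:ℝ)^2 * p z ≤ t * (16 * r) := by
        have hmono : ∑ z ∈ F, (z:ℝ)^2 * p z ≤ ∑ z ∈ F, (z:ℝ)^2 * Real.exp (-(z:ℝ)^2 * t) := by
          refine Finset.sum_le_sum (fun z _ => ?_)
          rcases eq_or_ne z 0 with h | h
          · subst h; simp
          · exact mul_le_mul_of_nonneg_left (htail z h) (sq_nonneg _)
        exact mul_le_mul_of_nonneg_left (le_trans hmono hsum2) htpos.le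
      have hlogS : Real.log S ≤ 4 * t * r := by
        have h1 : Real.log S ≤ S - 1 := by
          have := Real.log_le_sub_one_of_pos hSpos; linarith
        have h2 : S - 1 = 2 * r / (1 - r) := by
          rw [hS]; field_simp; ring
        have h3 : 2 * r / (1-r) ≤ 4 * r := by
          rw [div_le_iff₀ (by linarith)]
          nlinarith
        have h4 : 4 * r ≤ 4 * t * r := by nlinarith
        linarith
      have hexp1 : (2.5:ℝ) ≤ Real.exp 1 := by
        have := Real.exp_one_gt_d9
        linarith
      calc ∑ z ∈ F, -(p z * Real.log (p z))
          ≤ t * ∑ z ∈ F, (z:ℝ)^2 * p z + Real.log S := key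
      _ ≤ t * (16 * r) + 4 * t * r := by linarith
      _ = 20 * (t * r) := by ring
      _ ≤ 8 * (t * (r * Real.exp 1)) := by
          have hX : 0 ≤ t * r := le_of_lt (mul_pos htpos hr0)
          nlinarith [mul_le_mul_of_nonneg_right hexp1 hX]
      _ = 8 * Phi t := by rw [hPhi]
  -- assemble
  have hout : ∀ z : ℤ, z ∉ F → p z * Real.logb 2 (p z) = 0 := by
    intro z hz; rw [hp0 z hz]; simp
  have hLHS : -∑' z : ℤ, p z * Real.logb 2 (p z) = ∑ z ∈ F, -(p z * Real.logb 2 (p z)) := by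
    rw [tsum_eq_sum hout, ← Finset.sum_neg_distrib]
  have hlogb : ∀ z : ℤ, -(p z * Real.logb 2 (p z)) = -(p z * Real.log (p z)) / Real.log 2 := by
    intro z; simp only [Real.logb]; ring
  have hlog2 : (1:ℝ)/2 ≤ Real.log 2 := by
    have := Real.log_two_gt_d9; linarith
  show -∑' z : ℤ, p z * Real.logb 2 (p z) ≤ 20 * Phi t
  rw [hLHS]
  calc ∑ z ∈ F, -(p z * Real.logb 2 (p z))
      = (∑ z ∈ F, -(p z * Real.log (p z))) / Real.log 2 := by
        rw [Finset.sum_div]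
        exact Finset.sum_congr rfl (fun z _ => hlogb z)
  _ ≤ 2 * ∑ z ∈ F, -(p z * Real.log (p z)) := by
      rw [div_le_iff₀ (Real.log_pos (by norm_num : (1:ℝ) < 2))]
      nlinarith [hent_nn]
  _ ≤ 2 * (8 * Phi t) := by linarith [hnats]
  _ ≤ 20 * Phi t := by nlinarith [hΦnn]
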